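/- For any joint distribution P on binary variables X_i, X_j over {1,-1} with minmrg(P_{ij}) > 0: mindisc(P_{ij}) ≥ 1 - 2·mindiag(P_{ij})/minmrg(P_{ij}). -/

import Mathlib

/-- The first marginal of a pairwise distribution on `Bool × Bool`. -/
noncomputable def margI (P : Bool → Bool → ℝ) (x : Bool) : ℝ := ∑ y : Bool, P x y

/-- The second marginal of a pairwise distribution on `Bool × Bool`. -/
noncomputable def margJ (P : Bool → Bool → ℝ) (y : Bool) : ℝ := ∑ x : Bool, P x y

/-- The minimum marginal probability of a pairwise distribution. -/
noncomputable def minmrg2 (P : Bool → Bool → ℝ) : ℝ :=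
  min (min (margI P true) (margI P false)) (min (margJ P true) (margJ P false))

/-- `mindiag`: the smaller of the probabilities of agreement and disagreement. -/
noncomputable def mindiag (P : Bool → Bool → ℝ) : ℝ :=
  min (P true true + P false false) (P true false + P false true)

/-- `mindisc`: the smaller of the two conditional-probability discrepancies. -/
noncomputable def mindisc (P : Bool → Bool → ℝ) : ℝ :=
  min |P true true / margJ P true - P true false / margJ P false|
      |P true true / margI P true - P false true / margI P false|

lemma disc_bound (a b c d m : ℝ) (ha : 0 ≤ a) (hb : 0 ≤ b) (hc : 0 ≤ c) (hd : 0 ≤ d)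
    (hm : 0 < m) (h1 : m ≤ a + c) (h2 : m ≤ b + d) :
    1 - 2 * (min (a + d) (b + c) / m) ≤ |a / (a + c) - b / (b + d)| := by
  have hac : 0 < a + c := lt_of_lt_of_le hm h1
  have hbd : 0 < b + d := lt_of_lt_of_le hm h2
  have eA : a / (a + c) = 1 - c / (a + c) := by field_simp; ring
  have eB : b / (b + d) = 1 - d / (b + d) := by field_simp; ring
  have h3 : c / (a + c) ≤ c / m := by gcongr
  have h4 : b / (b + d) ≤ b / m := by gcongr
  have h5 : d / (b + d) ≤ d / m := by gcongr
  have h6 : a / (a + c) ≤ a / m := by gcongr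
  have nna : 0 ≤ a / m := div_nonneg ha hm.le
  have nnb : 0 ≤ b / m := div_nonneg hb hm.le
  have nnc : 0 ≤ c / m := div_nonneg hc hm.le
  have nnd : 0 ≤ d / m := div_nonneg hd hm.le
  rcases min_cases (a + d) (b + c) with ⟨he, _⟩ | ⟨he, _⟩
  · rw [he]
    calc 1 - 2 * ((a + d) / m) ≤ -(a / (a + c) - b / (b + d)) := by
          rw [eB, add_div]; linarith
      _ ≤ |a / (a + c) - b / (b + d)| := neg_le_abs _
  · rw [he]
    calc 1 - 2 * ((b + c) / m) ≤ a / (a + c) - b / (b + d) := by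
          rw [eA, add_div]; linarith
      _ ≤ |a / (a + c) - b / (b + d)| := le_abs_self _

/-- `mindisc(P_{ij}) ≥ 1 - 2·mindiag(P_{ij})/minmrg(P_{ij})`. -/
theorem mindisc_ge_one_sub (P : Bool → Bool → ℝ)
    (hnn : ∀ x y, 0 ≤ P x y)
    (hsum : ∑ x : Bool, ∑ y : Bool, P x y = 1)
    (hpos : 0 < minmrg2 P) :
    1 - 2 * (mindiag P / minmrg2 P) ≤ mindisc P := by
  set a := P true true with hA
  set b := P true false with hB
  set c := P false true with hC
  set d := P false false with hD
  set m := minmrg2 P with hM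
  have hIt : margI P true = a + b := by simp [margI, Fintype.sum_bool]; rfl
  have hIf : margI P false = c + d := by simp [margI, Fintype.sum_bool]; rfl
  have hJt : margJ P true = a + c := by simp [margJ, Fintype.sum_bool]; rfl
  have hJf : margJ P false = b + d := by simp [margJ, Fintype.sum_bool]; rfl
  have m1 : m ≤ a + b := by
    rw [hM, minmrg2, ← hIt]
    exact le_trans (min_le_left _ _) (min_le_left _ _)
  have m2 : m ≤ c + d := by
    rw [hM, minmrg2, ← hIf]
    exact le_trans (min_le_left _ _) (min_le_right _ _)
  have m3 : m ≤ a + c := by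
    rw [hM, minmrg2, ← hJt]
    exact le_trans (min_le_right _ _) (min_le_left _ _)
  have m4 : m ≤ b + d := by
    rw [hM, minmrg2, ← hJf]
    exact le_trans (min_le_right _ _) (min_le_right _ _)
  rw [mindisc, mindiag, hJt, hJf, hIt, hIf]
  refine le_min ?_ ?_
  · exact disc_bound a b c d m (hnn _ _) (hnn _ _) (hnn _ _) (hnn _ _) hpos m3 m4
  · have := disc_bound a c b d m (hnn _ _) (hnn _ _) (hnn _ _) (hnn _ _) hpos m1 m2
    rwa [add_comm c b] at this
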